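/- Let G be a connected α-regular graph for an infinite cardinal α. Then the distinguishing index of G is at most 2; that is, there is a 2-coloring of the edges of G preserved only by the identity automorphism. -/

import Mathlib

open Cardinal Set Classical

universe v in
instance instWOtoType (o : Ordinal.{v}) : IsWellOrder o.ToType (· < ·) := isWellOrder_lt

namespace DistProofAux
universe u

variable {V : Type u}

/-- Boundary lemma: in a connected graph, any nonempty proper set has an edge leaving it. -/
lemma exists_boundary (G : SimpleGraph V) (hGc : G.Connected) (S : Set V)
    (hS : S.Nonempty) (hS' : Sᶜ.Nonempty) : ∃ x ∈ S, ∃ y, y ∉ S ∧ G.Adj x y := by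
  obtain ⟨x, hx⟩ := hS
  obtain ⟨y, hy⟩ := hS'
  obtain ⟨p⟩ := hGc.preconnected x y
  revert hx hy
  induction p with
  | nil => intro hx hy; exact absurd hx hy
  | @cons u v w hadj q ih =>
    intro hu hw
    by_cases hv : v ∈ S
    · exact ih hv hw
    · exact ⟨u, hu, v, hv, hadj⟩

/-- A connected graph all of whose vertices have `α ≥ ℵ₀` neighbors has exactly `α` vertices. -/
lemma mk_V_eq (G : SimpleGraph V) (hGc : G.Connected) (α : Cardinal.{u}) (hα : ℵ₀ ≤ α)
    (hreg : ∀ v : V, #(G.neighborSet v) = α) : #V = α := by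
  have hVne : Nonempty V := hGc.nonempty
  obtain ⟨v0⟩ := hVne
  have hle : α ≤ #V := by
    rw [← hreg v0]
    exact mk_set_le _
  refine le_antisymm ?_ hle
  -- reach sets
  set reach : ℕ → Set V := fun n => {w | ∃ p : G.Walk w v0, p.length ≤ n} with hreach
  have hmono : ∀ n, reach n ⊆ reach (n+1) := by
    intro n w ⟨p, hp⟩; exact ⟨p, hp.trans (Nat.le_succ n)⟩
  have hcard : ∀ n, #(reach n) ≤ α := by
    intro n
    induction n with
    | zero =>
      have : reach 0 ⊆ {v0} := by
        rintro w ⟨p, hp⟩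
        have := SimpleGraph.Walk.eq_of_length_eq_zero (Nat.le_zero.mp hp)
        simp [this]
      calc #(reach 0) ≤ #({v0} : Set V) := mk_le_mk_of_subset this
        _ ≤ 1 := by rw [mk_singleton]
        _ ≤ α := le_trans one_le_aleph0 hα
    | succ n ih =>
      have hsub : reach (n+1) ⊆ reach n ∪ ⋃ x : reach n, G.neighborSet x := by
        rintro w ⟨p, hp⟩
        cases p with
        | nil => exact Or.inl ⟨SimpleGraph.Walk.nil, Nat.zero_le n⟩
        | cons hadj q =>
          rename_i y
          right
          refine mem_iUnion.mpr ⟨⟨y, ⟨q, Nat.succ_le_succ_iff.mp hp⟩⟩, ?_⟩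
          exact hadj.symm
      calc #(reach (n+1)) ≤ #(reach n ∪ ⋃ x : reach n, G.neighborSet x : Set V) :=
            mk_le_mk_of_subset hsub
        _ ≤ #(reach n) + #(⋃ x : reach n, G.neighborSet x) := mk_union_le _ _
        _ ≤ α + #(reach n) * ⨆ x : reach n, #(G.neighborSet x) :=
            add_le_add ih (mk_iUnion_le _)
        _ ≤ α + α * α := by
            refine add_le_add le_rfl (mul_le_mul' ih ?_)
            exact ciSup_le' fun x => (hreg _).le
        _ = α := by rw [mul_eq_self hα, add_eq_self hα]
  have huniv : (univ : Set V) = ⋃ n : ULift.{u} ℕ, reach n.down := by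
    ext w
    simp only [mem_univ, mem_iUnion, true_iff]
    obtain ⟨p⟩ := hGc.preconnected w v0
    exact ⟨⟨p.length⟩, p, le_rfl⟩
  calc #V = #(univ : Set V) := mk_univ.symm
    _ = #(⋃ n : ULift.{u} ℕ, reach n.down) := by rw [huniv]
    _ ≤ #(ULift.{u} ℕ) * ⨆ n : ULift.{u} ℕ, #(reach n.down) := mk_iUnion_le _
    _ ≤ ℵ₀ * α := by
        refine mul_le_mul' (by simp) (ciSup_le' fun n => hcard n.down)
    _ = α := by rw [mul_comm, mul_eq_max hα le_rfl]; exact max_eq_left hα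

end DistProofAux


namespace DistProof
universe u

/-- Bundle of the hypotheses of the theorem. -/
structure Setup (V : Type u) where
  α : Cardinal.{u}
  G : SimpleGraph V
  hα : ℵ₀ ≤ α
  hGc : G.Connected
  hreg : ∀ v : V, #(G.neighborSet v) = α

namespace Setup

variable {V : Type u} (S : Setup V)

lemma mk_V : #V = S.α :=
  DistProofAux.mk_V_eq S.G S.hGc S.α S.hα S.hreg

/-- The index type: a well order of type `S.α.ord`. -/
abbrev I : Type u := S.α.ord.ToType

lemma mk_I : #S.I = S.α := mk_ord_toType S.α

lemma card_Iio_lt (i : S.I) : #{j : S.I // j < i} < S.α := by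
  have h1 : (Ordinal.typein (α := S.I) (· < ·) i).card = #{j : S.I // j < i} :=
    (Ordinal.card_typein i).symm
  have h2 : Ordinal.typein (α := S.I) (· < ·) i < S.α.ord := by
    have := Ordinal.typein_lt_type ((· < ·) : S.I → S.I → Prop) i
    rwa [Ordinal.type_toType] at this
  rw [← h1]
  exact Cardinal.lt_ord.mp h2

lemma card_Iic_lt (i : S.I) : #{j : S.I // j ≤ i} < S.α := by
  have : {j : S.I // j ≤ i} ≃ ({j : S.I // j < i} ⊕ PUnit.{u+1}) := by
    refine Equiv.ofBijective (fun j => if h : j.1 < i then Sum.inl ⟨j.1, h⟩ else Sum.inr ⟨⟩) ?_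
    constructor
    · rintro ⟨a, ha⟩ ⟨b, hb⟩ hab
      by_cases h1 : a < i <;> by_cases h2 : b < i <;> simp [h1, h2] at hab
      · simpa using hab
      · have : a = i := le_antisymm ha (not_lt.mp h1)
        have : b = i := le_antisymm hb (not_lt.mp h2)
        simp_all
    · rintro (⟨a, ha⟩ | ⟨⟩)
      · exact ⟨⟨a, ha.le⟩, by simp [ha]⟩
      · exact ⟨⟨i, le_rfl⟩, by simp⟩
  rw [mk_congr this, mk_sum]
  simp only [mk_punit, lift_one, lift_id]
  exact Cardinal.add_lt_of_lt S.hα (S.card_Iio_lt i) (lt_of_lt_of_le one_lt_aleph0 S.hα)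

instance : Nonempty S.I := by
  rw [← Cardinal.mk_ne_zero_iff, mk_I]
  exact ne_of_gt (lt_of_lt_of_le aleph0_pos S.hα)

theorem nonemptyV (S : Setup V) : Nonempty V := S.hGc.nonempty

/-- bijection between `V` and the index type -/
noncomputable def bV : V ≃ S.I :=
  (Cardinal.eq.mp (by rw [mk_I, S.mk_V])).some

/-- the step decoder -/
noncomputable def dec : S.I ≃ (S.I ⊕ S.I × S.I) :=
  (Cardinal.eq.mp (by
    rw [mk_sum, mk_prod, lift_id, lift_id, mk_I, mul_eq_self S.hα, add_eq_self S.hα])).some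


/-! ### The transfinite construction of the spanning structure -/

noncomputable def junk : V := Classical.choice S.hGc.nonempty

/-- well-order on `V` pulled back from `I` -/
def rV (a b : V) : Prop := S.bV a < S.bV b

lemma wfV : WellFounded S.rV := InvImage.wf S.bV wellFounded_lt

noncomputable def i0 : S.I := (wellFounded_lt (α := S.I)).min univ univ_nonempty

lemma i0_le (i : S.I) : S.i0 ≤ i :=
  not_lt.mp ((wellFounded_lt (α := S.I)).not_lt_min univ (mem_univ i))

def eligSet (H : Set V) : Set V := {u | u ∉ H ∧ ∃ x ∈ H, S.G.Adj x u}

noncomputable def prnt (H : Set V) (u : V) : V :=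
  if h : ∃ x ∈ H, S.G.Adj x u then h.choose else S.junk

lemma prnt_spec {H : Set V} {u : V} (h : ∃ x ∈ H, S.G.Adj x u) :
    S.prnt H u ∈ H ∧ S.G.Adj (S.prnt H u) u := by
  rw [prnt, dif_pos h]
  exact ⟨h.choose_spec.1, h.choose_spec.2⟩

noncomputable def coverStep (H : Set V) : V × V :=
  if hE : (S.eligSet H).Nonempty then
    (S.wfV.min (S.eligSet H) hE, S.prnt H (S.wfV.min (S.eligSet H) hE))
  else (S.junk, S.junk)

lemma coverStep_spec {H : Set V} (hE : (S.eligSet H).Nonempty) :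
    (S.coverStep H).1 ∈ S.eligSet H ∧
    ((S.coverStep H).2 ∈ H ∧ S.G.Adj (S.coverStep H).2 (S.coverStep H).1) ∧
    ∀ y ∈ S.eligSet H, ¬ S.rV y (S.coverStep H).1 := by
  rw [coverStep, dif_pos hE]
  have hmem := S.wfV.min_mem _ hE
  exact ⟨hmem, S.prnt_spec hmem.2, fun y hy => S.wfV.not_lt_min _ hy⟩

lemma coverStep_junk {H : Set V} (hE : ¬ (S.eligSet H).Nonempty) :
    S.coverStep H = (S.junk, S.junk) := by
  rw [coverStep, dif_neg hE]

/-- the step core, as a function of the history -/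
noncomputable def core (i : S.I) (H : Set V) (f : S.I → V) : V × V :=
  (S.dec i).elim (fun _ => S.coverStep H) (fun ji =>
    if _ : ji.1 < i then
      (if hF : (S.G.neighborSet (f ji.1) \ H).Nonempty then (hF.some, f ji.1)
       else S.coverStep H)
    else S.coverStep H)

noncomputable def step (i : S.I) (rec : ∀ j, j < i → V × V) : V × V :=
  S.core i ((fun j => if h : j < i then (rec j h).1 else S.junk) '' (Iio i))
    (fun j => if h : j < i then (rec j h).1 else S.junk)

noncomputable def St : S.I → V × V := fun i => (wellFounded_lt (α := S.I)).fix S.step i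

noncomputable def vtx (i : S.I) : V := (S.St i).1
noncomputable def prv (i : S.I) : V := (S.St i).2
def Hset (i : S.I) : Set V := S.vtx '' (Iio i)

lemma St_eq' (i : S.I) :
    S.St i = S.core i (S.Hset i) (fun j => if _ : j < i then S.vtx j else S.junk) := by
  have h0 : S.St i = S.step i (fun j _ => S.St j) := WellFounded.fix_eq _ _ i
  rw [h0, step]
  congr 1
  apply image_congr
  intro j hj
  exact dif_pos (mem_Iio.mp hj)

lemma Hset_card (i : S.I) : #(S.Hset i) < S.α := by
  have h1 : #(S.Hset i) ≤ #(Iio i : Set S.I) := mk_image_le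
  have h2 : #(Iio i : Set S.I) = #{j : S.I // j < i} := rfl
  rw [h2] at h1
  exact lt_of_le_of_lt h1 (S.card_Iio_lt i)

lemma Hset_compl_nonempty (i : S.I) : (S.Hset i)ᶜ.Nonempty := by
  by_contra h
  rw [not_nonempty_iff_eq_empty, compl_empty_iff] at h
  have : #(S.Hset i) = S.α := by rw [h, mk_univ, S.mk_V]
  exact absurd this (ne_of_lt (S.Hset_card i))

lemma elig_nonempty {i : S.I} (hH : (S.Hset i).Nonempty) :
    (S.eligSet (S.Hset i)).Nonempty := by
  obtain ⟨x, hx, y, hy, hadj⟩ :=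
    DistProofAux.exists_boundary S.G S.hGc _ hH (S.Hset_compl_nonempty i)
  exact ⟨y, hy, x, hx, hadj⟩

lemma feed_nonempty (i j : S.I) : (S.G.neighborSet (S.vtx j) \ S.Hset i).Nonempty := by
  by_contra h
  rw [not_nonempty_iff_eq_empty, diff_eq_empty] at h
  have h1 : #(S.G.neighborSet (S.vtx j)) ≤ #(S.Hset i) := mk_le_mk_of_subset h
  rw [S.hreg] at h1
  exact absurd h1 (not_le.mpr (S.Hset_card i))

lemma St_feed {i : S.I} {ji : S.I × S.I} (hd : S.dec i = Sum.inr ji) (hj : ji.1 < i) :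
    S.vtx i ∈ S.G.neighborSet (S.vtx ji.1) \ S.Hset i ∧ S.prv i = S.vtx ji.1 := by
  have h0 := S.St_eq' i
  rw [core, hd, Sum.elim_inr] at h0
  simp only [dif_pos hj] at h0
  rw [dif_pos (S.feed_nonempty i ji.1)] at h0
  constructor
  · show (S.St i).1 ∈ _
    rw [h0]
    exact (S.feed_nonempty i ji.1).some_mem
  · show (S.St i).2 = _
    rw [h0]

lemma St_cover {i : S.I}
    (hd : (∃ x, S.dec i = Sum.inl x) ∨ ∃ ji, S.dec i = Sum.inr ji ∧ ¬ ji.1 < i) :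
    S.St i = S.coverStep (S.Hset i) := by
  have h0 := S.St_eq' i
  rcases hd with ⟨x, hx⟩ | ⟨ji, hji, hj⟩
  · rw [core, hx, Sum.elim_inl] at h0; exact h0
  · rw [core, hji, Sum.elim_inr] at h0
    rw [dif_neg hj] at h0
    exact h0

lemma vtx_not_mem (i : S.I) : S.vtx i ∉ S.Hset i := by
  rcases hdec : S.dec i with x | ji
  · have h0 := S.St_cover (Or.inl ⟨x, hdec⟩)
    by_cases hE : (S.eligSet (S.Hset i)).Nonempty
    · have := (S.coverStep_spec hE).1
      rw [← h0] at this
      exact this.1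
    · have hH : ¬ (S.Hset i).Nonempty := fun h => hE (S.elig_nonempty h)
      rw [not_nonempty_iff_eq_empty] at hH
      rw [hH]
      exact notMem_empty _
  · by_cases hj : ji.1 < i
    · exact ((S.St_feed hdec hj).1).2
    · have h0 := S.St_cover (Or.inr ⟨ji, hdec, hj⟩)
      by_cases hE : (S.eligSet (S.Hset i)).Nonempty
      · have := (S.coverStep_spec hE).1
        rw [← h0] at this
        exact this.1
      · have hH : ¬ (S.Hset i).Nonempty := fun h => hE (S.elig_nonempty h)
        rw [not_nonempty_iff_eq_empty] at hH
        rw [hH]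
        exact notMem_empty _

lemma vtx_inj : Function.Injective S.vtx := by
  intro a b hab
  by_contra hne
  rcases lt_or_gt_of_ne hne with h | h
  · exact S.vtx_not_mem b ⟨a, h, hab⟩
  · exact S.vtx_not_mem a ⟨b, h, hab.symm⟩

lemma Hset_i0 : S.Hset S.i0 = ∅ := by
  rw [Hset]
  have : Iio S.i0 = ∅ := by
    ext j; simp only [mem_Iio, mem_empty_iff_false, iff_false, not_lt]
    exact S.i0_le j
  rw [this, image_empty]

lemma Hset_nonempty {i : S.I} (hi : i ≠ S.i0) : (S.Hset i).Nonempty := by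
  have : S.i0 < i := lt_of_le_of_ne (S.i0_le i) (Ne.symm hi)
  exact ⟨S.vtx S.i0, ⟨S.i0, this, rfl⟩⟩

lemma prv_spec {i : S.I} (hi : i ≠ S.i0) :
    S.G.Adj (S.prv i) (S.vtx i) ∧ ∃ m, m < i ∧ S.vtx m = S.prv i := by
  have hH := S.Hset_nonempty hi
  have hE := S.elig_nonempty hH
  rcases hdec : S.dec i with x | ji
  · have h0 := S.St_cover (Or.inl ⟨x, hdec⟩)
    have hs := S.coverStep_spec hE
    rw [← h0] at hs
    obtain ⟨m, hm, hvm⟩ := hs.2.1.1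
    exact ⟨hs.2.1.2, m, hm, hvm⟩
  · by_cases hj : ji.1 < i
    · obtain ⟨hmem, hpr⟩ := S.St_feed hdec hj
      refine ⟨?_, ji.1, hj, hpr.symm⟩
      rw [hpr]
      exact hmem.1
    · have h0 := S.St_cover (Or.inr ⟨ji, hdec, hj⟩)
      have hs := S.coverStep_spec hE
      rw [← h0] at hs
      obtain ⟨m, hm, hvm⟩ := hs.2.1.1
      exact ⟨hs.2.1.2, m, hm, hvm⟩

lemma St_i0 : S.St S.i0 = (S.junk, S.junk) := by
  have hE : ¬ (S.eligSet (S.Hset S.i0)).Nonempty := by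
    rw [Hset_i0]
    rintro ⟨u, hu⟩
    obtain ⟨x, hx, -⟩ := hu.2
    exact notMem_empty x hx
  rcases hdec : S.dec S.i0 with x | ji
  · rw [S.St_cover (Or.inl ⟨x, hdec⟩), S.coverStep_junk hE]
  · by_cases hj : ji.1 < S.i0
    · exact absurd hj (not_lt.mpr (S.i0_le ji.1))
    · rw [S.St_cover (Or.inr ⟨ji, hdec, hj⟩), S.coverStep_junk hE]


/-! ### Surjectivity -/

lemma mk_Iic_lt (i : S.I) : #(Iic i : Set S.I) < S.α := S.card_Iic_lt i

lemma vtx_surj : Function.Surjective S.vtx := by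
  by_contra hsurj
  rw [Function.Surjective] at hsurj
  push_neg at hsurj
  obtain ⟨u0, hu0⟩ := hsurj
  have hRne : (Set.range S.vtx).Nonempty := ⟨S.vtx S.i0, mem_range_self _⟩
  have hRc : (Set.range S.vtx)ᶜ.Nonempty := ⟨u0, fun h => by
    obtain ⟨i, hi⟩ := h; exact hu0 i hi⟩
  obtain ⟨x, hx, y, hy, hadj⟩ := DistProofAux.exists_boundary S.G S.hGc _ hRne hRc
  obtain ⟨m, rfl⟩ := hx
  -- covering steps after m
  set C : Set S.I := {i | (∃ x, S.dec i = Sum.inl x) ∧ m < i} with hC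
  have hCelig : ∀ i ∈ C, y ∈ S.eligSet (S.Hset i) := by
    rintro i ⟨-, hmi⟩
    refine ⟨fun hmem => ?_, S.vtx m, ⟨m, hmi, rfl⟩, hadj⟩
    obtain ⟨j, -, hj⟩ := hmem
    exact hy ⟨j, hj⟩
  -- each covering step picks a vertex of rank ≤ rank y
  have hrank : ∀ i ∈ C, S.bV (S.vtx i) ≤ S.bV y := by
    intro i hi
    obtain ⟨⟨x', hx'⟩, -⟩ := id hi
    have h0 := S.St_cover (Or.inl ⟨x', hx'⟩)
    have hE : (S.eligSet (S.Hset i)).Nonempty := ⟨y, hCelig i hi⟩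
    have := (S.coverStep_spec hE).2.2 y (hCelig i hi)
    rw [← h0] at this
    exact not_lt.mp this
  -- C injects into a small set
  have hsmall : #C ≤ #({z : V | S.bV z ≤ S.bV y} : Set V) := by
    refine ⟨⟨fun i => ⟨S.vtx i.1, hrank i.1 i.2⟩, ?_⟩⟩
    intro a b hab
    have := S.vtx_inj (congrArg Subtype.val hab)
    exact Subtype.ext this
  have hsmall2 : #({z : V | S.bV z ≤ S.bV y} : Set V) < S.α := by
    have : #({z : V | S.bV z ≤ S.bV y} : Set V) ≤ #(Iic (S.bV y) : Set S.I) := by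
      refine ⟨⟨fun z => ⟨S.bV z.1, z.2⟩, ?_⟩⟩
      intro a b hab
      exact Subtype.ext (S.bV.injective (congrArg Subtype.val hab))
    exact lt_of_le_of_lt this (S.mk_Iic_lt _)
  -- but C is large
  have hlarge : S.α ≤ #C := by
    have hA : #({i : S.I | ∃ x, S.dec i = Sum.inl x} : Set S.I) = S.α := by
      have : ({i : S.I | ∃ x, S.dec i = Sum.inl x} : Set S.I) =
          Set.range (fun x : S.I => S.dec.symm (Sum.inl x)) := by
        ext i
        constructor
        · rintro ⟨x, hx⟩
          exact ⟨x, show S.dec.symm (Sum.inl x) = i by rw [← hx, Equiv.symm_apply_apply]⟩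
        · rintro ⟨x, rfl⟩
          exact ⟨x, by simp⟩
      rw [this, mk_range_eq _ (fun a b hab => Sum.inl_injective (S.dec.symm.injective hab)),
        S.mk_I]
    by_contra hCs
    push_neg at hCs
    have hsub : ({i : S.I | ∃ x, S.dec i = Sum.inl x} : Set S.I) ⊆
        (({i : S.I | ∃ x, S.dec i = Sum.inl x} : Set S.I) ∩ Iic m) ∪ C := by
      intro i hi
      by_cases him : i ≤ m
      · exact Or.inl ⟨hi, him⟩
      · exact Or.inr ⟨hi, not_le.mp him⟩
    have h1 : S.α ≤ #((({i : S.I | ∃ x, S.dec i = Sum.inl x} : Set S.I) ∩ Iic m) ∪ C : Set S.I) := by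
      exact le_trans (le_of_eq hA.symm) (mk_le_mk_of_subset hsub)
    have h2 : #((({i : S.I | ∃ x, S.dec i = Sum.inl x} : Set S.I) ∩ Iic m) ∪ C : Set S.I) < S.α := by
      refine lt_of_le_of_lt (mk_union_le _ _) (Cardinal.add_lt_of_lt S.hα ?_ hCs)
      exact lt_of_le_of_lt (mk_le_mk_of_subset (inter_subset_right)) (S.mk_Iic_lt m)
    exact absurd (lt_of_le_of_lt h1 h2) (lt_irrefl _)
  exact absurd (lt_of_le_of_lt (le_trans hlarge hsmall) hsmall2) (lt_irrefl _)


/-! ### The spanning tree structure -/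

noncomputable def vtxE : S.I ≃ V := Equiv.ofBijective S.vtx ⟨S.vtx_inj, S.vtx_surj⟩

noncomputable def idx : V → S.I := S.vtxE.symm

@[simp] lemma vtx_idx (z : V) : S.vtx (S.idx z) = z := S.vtxE.apply_symm_apply z

@[simp] lemma idx_vtx (i : S.I) : S.idx (S.vtx i) = i := S.vtxE.symm_apply_apply i

noncomputable def root : V := S.vtx S.i0

noncomputable def pr (z : V) : V := S.prv (S.idx z)

lemma idx_ne_i0 {z : V} (hz : z ≠ S.root) : S.idx z ≠ S.i0 := by
  intro h
  apply hz
  rw [← S.vtx_idx z, h, root]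

lemma pr_adj {z : V} (hz : z ≠ S.root) : S.G.Adj (S.pr z) z := by
  have := (S.prv_spec (S.idx_ne_i0 hz)).1
  rwa [S.vtx_idx] at this

lemma idx_pr_lt {z : V} (hz : z ≠ S.root) : S.idx (S.pr z) < S.idx z := by
  obtain ⟨m, hm, hvm⟩ := (S.prv_spec (S.idx_ne_i0 hz)).2
  rw [pr, ← hvm, idx_vtx]
  exact hm

lemma pr_ne {z : V} (hz : z ≠ S.root) : S.pr z ≠ z := by
  intro h
  have := S.idx_pr_lt hz
  rw [h] at this
  exact lt_irrefl _ this

lemma pr_root : S.pr S.root = S.root := by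
  rw [pr, root, idx_vtx]
  show (S.St S.i0).2 = S.vtx S.i0
  rw [S.St_i0]
  show S.junk = (S.St S.i0).1
  rw [S.St_i0]

/-- children of a vertex in the spanning tree -/
def ch (a : V) : Set V := {w | w ≠ S.root ∧ S.pr w = a}

lemma ch_adj {a w : V} (hw : w ∈ S.ch a) : S.G.Adj a w := by
  have := S.pr_adj hw.1
  rwa [hw.2] at this

lemma mk_ch_ge (a : V) : S.α ≤ #(S.ch a) := by
  set g : S.I → S.I := fun β => S.dec.symm (Sum.inr (S.idx a, β)) with hg
  have hginj : Function.Injective g := by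
    intro x y hxy
    have := S.dec.symm.injective hxy
    exact (Prod.ext_iff.mp (Sum.inr_injective this)).2
  set B : Set S.I := {β | S.idx a < g β} with hB
  have hmem : ∀ β ∈ B, S.vtx (g β) ∈ S.ch a := by
    intro β hβ
    have hd : S.dec (g β) = Sum.inr (S.idx a, β) := S.dec.apply_symm_apply _
    have hfeed := S.St_feed hd hβ
    constructor
    · intro h
      have hβ' : S.idx a < g β := hβ
      have heq : g β = S.i0 := by
        rw [← S.idx_vtx (g β), h, root, idx_vtx]
      rw [heq] at hβ'
      exact absurd hβ' (not_lt.mpr (S.i0_le _))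
    · show S.prv (S.idx (S.vtx (g β))) = a
      rw [idx_vtx, hfeed.2, vtx_idx]
  -- B is large
  have hBlarge : S.α ≤ #B := by
    by_contra hBs
    push_neg at hBs
    have hcompl : #(Bᶜ : Set S.I) < S.α := by
      have h3 : #(Bᶜ : Set S.I) ≤ #(Iic (S.idx a) : Set S.I) := by
        refine ⟨⟨fun β => ⟨g β.1, not_lt.mp (show ¬ S.idx a < g β.1 from β.2)⟩, ?_⟩⟩
        intro x y hxy
        exact Subtype.ext (hginj (congrArg Subtype.val hxy))
      exact lt_of_le_of_lt h3 (S.mk_Iic_lt _)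
    have : (univ : Set S.I) ⊆ B ∪ Bᶜ := by
      intro x _; by_cases h : x ∈ B
      · exact Or.inl h
      · exact Or.inr h
    have h1 : S.α ≤ #(B ∪ Bᶜ : Set S.I) := by
      have h2 := mk_le_mk_of_subset this
      rwa [mk_univ, S.mk_I] at h2
    exact absurd (lt_of_le_of_lt h1
      (lt_of_le_of_lt (mk_union_le _ _) (Cardinal.add_lt_of_lt S.hα hBs hcompl)))
      (lt_irrefl _)
  refine le_trans hBlarge ?_
  refine ⟨⟨fun β => ⟨S.vtx (g β.1), hmem β.1 β.2⟩, ?_⟩⟩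
  intro x y hxy
  exact Subtype.ext (hginj (S.vtx_inj (congrArg Subtype.val hxy)))


/-! ### Labels -/

/-- The label codomain: order type `ω·κ` -/
abbrev J : Type u := S.I ×ₗ ℕ

lemma mk_J_le : #S.J ≤ S.α := by
  have h1 : #S.J = #(S.I × ℕ) := mk_congr (toLex (α := S.I × ℕ)).symm
  rw [h1, mk_prod, lift_uzero, mk_nat, lift_aleph0, S.mk_I, mul_eq_max S.hα le_rfl,
    max_eq_left S.hα]

noncomputable def sigE (a : V) (o : S.J) : {q : S.J // q < o} ↪ (S.ch a) :=
  Classical.choice (by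
    rw [← Cardinal.le_def]
    exact le_trans (le_trans (mk_subtype_le _) S.mk_J_le) (S.mk_ch_ge a))

/-- the selected child of `a` (with ambient label `o`) carrying label `q` -/
noncomputable def sg (a : V) (o q : S.J) : V :=
  if h : q < o then (S.sigE a o ⟨q, h⟩).1 else S.junk

lemma sg_mem {a : V} {o q : S.J} (h : q < o) : S.sg a o q ∈ S.ch a := by
  rw [sg, dif_pos h]
  exact (S.sigE a o ⟨q, h⟩).2

lemma sg_inj {a : V} {o q q' : S.J} (h : q < o) (h' : q' < o)
    (he : S.sg a o q = S.sg a o q') : q = q' := by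
  rw [sg, dif_pos h, sg, dif_pos h'] at he
  have := (S.sigE a o).injective (Subtype.ext he)
  exact congrArg Subtype.val this

/-- body of the label recursion -/
noncomputable def labF : ∀ z : V, (∀ w : V, S.idx w < S.idx z → S.J) → S.J := fun z rec =>
  if hz : z = S.root then toLex (S.idx z, 0)
  else
    if hsel : ∃ q, q < rec (S.pr z) (S.idx_pr_lt hz) ∧
        S.sg (S.pr z) (rec (S.pr z) (S.idx_pr_lt hz)) q = z then
      hsel.choose
    else toLex (S.idx z, 0)

noncomputable def lab : V → S.J := fun z =>
  (InvImage.wf S.idx (wellFounded_lt (α := S.I))).fix S.labF z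

lemma lab_eq (z : V) : S.lab z = S.labF z (fun w _ => S.lab w) :=
  WellFounded.fix_eq _ _ z

lemma lab_root : S.lab S.root = toLex (S.idx S.root, 0) := by
  rw [lab_eq, labF, dif_pos rfl]

/-- `z` is a selected child of its parent -/
def Sel (z : V) : Prop :=
  z ≠ S.root ∧ ∃ q, q < S.lab (S.pr z) ∧ S.sg (S.pr z) (S.lab (S.pr z)) q = z

lemma lab_eq_of_sel {z : V} (hz : z ≠ S.root)
    (hsel : ∃ q, q < S.lab (S.pr z) ∧ S.sg (S.pr z) (S.lab (S.pr z)) q = z) :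
    S.lab z = hsel.choose := by
  conv_lhs => rw [S.lab_eq z]
  rw [labF, dif_neg hz, dif_pos hsel]

lemma lab_eq_of_not {z : V} (h : ¬ S.Sel z) : S.lab z = toLex (S.idx z, 0) := by
  by_cases hz : z = S.root
  · rw [hz]; exact S.lab_root
  · have hsel : ¬ ∃ q, q < S.lab (S.pr z) ∧ S.sg (S.pr z) (S.lab (S.pr z)) q = z :=
      fun hq => h ⟨hz, hq⟩
    conv_lhs => rw [S.lab_eq z]
    rw [labF, dif_neg hz, dif_neg hsel]

lemma lab_witness {w : V} (hne : w ≠ S.root) {q : S.J} (hq : q < S.lab (S.pr w))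
    (he : S.sg (S.pr w) (S.lab (S.pr w)) q = w) : S.lab w = q := by
  have hsel : ∃ q, q < S.lab (S.pr w) ∧ S.sg (S.pr w) (S.lab (S.pr w)) q = w := ⟨q, hq, he⟩
  have h1 := S.lab_eq_of_sel hne hsel
  have h2 := hsel.choose_spec
  rw [h1]
  refine S.sg_inj (a := S.pr w) h2.1 hq ?_
  rw [h2.2, he]

lemma lab_spec_of_sel {z : V} (h : S.Sel z) :
    S.lab z < S.lab (S.pr z) ∧ S.sg (S.pr z) (S.lab (S.pr z)) (S.lab z) = z := by
  obtain ⟨hz, q, hq, he⟩ := h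
  have := S.lab_witness hz hq he
  rw [this]
  exact ⟨hq, he⟩

lemma lab_lt_pr {z : V} (h : S.Sel z) : S.lab z < S.lab (S.pr z) :=
  (S.lab_spec_of_sel h).1

lemma lab_sg (a : V) {q : S.J} (hq : q < S.lab a) : S.lab (S.sg a (S.lab a) q) = q := by
  obtain ⟨hne, hpr⟩ := S.sg_mem (a := a) hq
  refine S.lab_witness hne (q := q) ?_ ?_
  · rw [hpr]; exact hq
  · rw [hpr]

lemma sel_of_sg (a : V) {q : S.J} (hq : q < S.lab a) : S.Sel (S.sg a (S.lab a) q) := by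
  obtain ⟨hne, hpr⟩ := S.sg_mem (a := a) hq
  refine ⟨hne, q, ?_, ?_⟩
  · rw [hpr]; exact hq
  · rw [hpr]


/-! ### The red relation and the coloring -/

def Rd (a b : V) : Prop :=
  b ≠ S.root ∧ S.pr b = a ∧ ∃ q, q < S.lab a ∧ S.sg a (S.lab a) q = b

def RedAdj (a b : V) : Prop := S.Rd a b ∨ S.Rd b a

lemma Rd_adj {a b : V} (h : S.Rd a b) : S.G.Adj a b := by
  obtain ⟨hne, hpr, -⟩ := h
  have := S.pr_adj hne
  rwa [hpr] at this

lemma redAdj_symm {a b : V} (h : S.RedAdj a b) : S.RedAdj b a := Or.symm h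

lemma redAdj_adj {a b : V} (h : S.RedAdj a b) : S.G.Adj a b := by
  rcases h with h | h
  · exact S.Rd_adj h
  · exact (S.Rd_adj h).symm

noncomputable def col : Sym2 V → Fin 2 :=
  Sym2.lift ⟨fun a b => if S.RedAdj a b then 1 else 0, by
    intro a b
    simp only []
    by_cases h : S.RedAdj a b
    · rw [if_pos h, if_pos (S.redAdj_symm h)]
    · rw [if_neg h, if_neg (fun h' => h (S.redAdj_symm h'))]⟩

lemma col_eq_one_iff {a b : V} : S.col s(a, b) = 1 ↔ S.RedAdj a b := by
  show (if S.RedAdj a b then (1 : Fin 2) else 0) = 1 ↔ _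
  split_ifs with h
  · simp [h]
  · simp [h]

lemma redAdj_iff {z u : V} : S.RedAdj z u ↔
    (∃ q, q < S.lab z ∧ S.sg z (S.lab z) q = u) ∨ (S.Sel z ∧ u = S.pr z) := by
  constructor
  · rintro (⟨hne, hpr, hq⟩ | ⟨hne, hpr, q, hq, he⟩)
    · exact Or.inl hq
    · refine Or.inr ⟨⟨hne, q, ?_, ?_⟩, hpr.symm⟩
      · rw [hpr]; exact hq
      · rw [hpr]; exact he
  · rintro (⟨q, hq, he⟩ | ⟨⟨hne, q, hq, he⟩, hu⟩)
    · obtain ⟨h1, h2⟩ := S.sg_mem hq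
      rw [he] at h1 h2
      exact Or.inl ⟨h1, h2, q, hq, he⟩
    · subst hu
      exact Or.inr ⟨hne, rfl, q, hq, he⟩

lemma pr_not_sg {w : V} {q : S.J} (hq : q < S.lab w) : S.sg w (S.lab w) q ≠ S.pr w := by
  obtain ⟨hne, hpr⟩ := S.sg_mem hq
  intro h
  by_cases hw : w = S.root
  · apply hne
    rw [h, hw, S.pr_root]
  · have h1 : S.idx w < S.idx (S.sg w (S.lab w) q) := by
      have := S.idx_pr_lt hne
      rwa [hpr] at this
    have h2 : S.idx (S.pr w) < S.idx w := S.idx_pr_lt hw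
    rw [← h] at h2
    exact absurd (h1.trans h2) (lt_irrefl _)

/-! ### Lex order facts -/

lemma J_lt_zero {p : S.I × ℕ} {x : S.I} (h : toLex p < toLex (x, 0)) : p.1 < x := by
  rcases Prod.Lex.lt_iff.mp h with h1 | ⟨-, h2⟩
  · exact h1
  · exact absurd h2 (Nat.not_lt_zero _)

lemma J_mid {p : S.I × ℕ} {x : S.I} (h : toLex p < toLex (x, 0)) :
    toLex p < toLex (p.1, p.2 + 1) ∧ toLex (p.1, p.2 + 1) < toLex (x, 0) := by
  constructor
  · exact Prod.Lex.lt_iff.mpr (Or.inr ⟨rfl, Nat.lt_succ_self _⟩)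
  · refine Prod.Lex.lt_iff.mpr (Or.inl ?_)
    show p.1 < x
    exact S.J_lt_zero h


/-! ### Rigidity -/

lemma red_pull (φ : S.G ≃g S.G) (hred : ∀ a b : V, S.RedAdj (φ a) (φ b) ↔ S.RedAdj a b)
    (z v : V) (h : S.RedAdj (φ z) v) : S.RedAdj z (φ.symm v) := by
  apply (hred z (φ.symm v)).mp
  rwa [RelIso.apply_symm_apply]

lemma lab_phi (φ : S.G ≃g S.G) (hred : ∀ a b : V, S.RedAdj (φ a) (φ b) ↔ S.RedAdj a b) :
    ∀ γ : S.J, ∀ y : V, S.lab y = γ → S.lab (φ y) = γ := by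
  intro γ
  induction γ using WellFoundedLT.induction with
  | _ γ IH =>
  intro y hy
  rcases lt_trichotomy (S.lab (φ y)) γ with hlt | heq | hgt
  · -- the label cannot drop
    exfalso
    have hβy : S.lab (φ y) < S.lab y := by rw [hy]; exact hlt
    have hredyz : S.RedAdj y (S.sg y (S.lab y) (S.lab (φ y))) :=
      S.redAdj_iff.mpr (Or.inl ⟨S.lab (φ y), hβy, rfl⟩)
    have hlabz : S.lab (S.sg y (S.lab y) (S.lab (φ y))) = S.lab (φ y) := S.lab_sg y hβy
    have h1 : S.RedAdj (φ y) (φ (S.sg y (S.lab y) (S.lab (φ y)))) :=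
      (hred y _).mpr hredyz
    have hlabφz : S.lab (φ (S.sg y (S.lab y) (S.lab (φ y)))) = S.lab (φ y) :=
      IH _ hlt _ hlabz
    rcases S.redAdj_iff.mp h1 with ⟨q, hq, he⟩ | ⟨hselw, he⟩
    · have h2 : S.lab (φ (S.sg y (S.lab y) (S.lab (φ y)))) = q := by
        rw [← he]; exact S.lab_sg _ hq
      rw [hlabφz] at h2
      rw [← h2] at hq
      exact absurd hq (lt_irrefl _)
    · have h2 := S.lab_lt_pr hselw
      rw [← he, hlabφz] at h2
      exact absurd h2 (lt_irrefl _)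
  · exact heq
  · -- the label cannot rise
    exfalso
    have hγw : γ < S.lab (φ y) := hgt
    have hlabu : S.lab (S.sg (φ y) (S.lab (φ y)) γ) = γ := S.lab_sg (φ y) hγw
    have hredwu : S.RedAdj (φ y) (S.sg (φ y) (S.lab (φ y)) γ) :=
      S.redAdj_iff.mpr (Or.inl ⟨γ, hγw, rfl⟩)
    have hredyt : S.RedAdj y (φ.symm (S.sg (φ y) (S.lab (φ y)) γ)) :=
      S.red_pull φ hred y _ hredwu
    -- Step A : y is selected and its parent is sent to the γ-child of φ y
    have hA : S.Sel y ∧ φ (S.pr y) = S.sg (φ y) (S.lab (φ y)) γ := by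
      rcases S.redAdj_iff.mp hredyt with ⟨q, hq, he⟩ | ⟨hsel, he⟩
      · exfalso
        have hq2 : q < γ := by rw [← hy]; exact hq
        have h3 : S.lab (φ.symm (S.sg (φ y) (S.lab (φ y)) γ)) = q := by
          rw [← he]; exact S.lab_sg _ hq
        have h4 := IH q hq2 _ h3
        rw [RelIso.apply_symm_apply] at h4
        rw [hlabu] at h4
        rw [h4] at hq2
        exact absurd hq2 (lt_irrefl _)
      · refine ⟨hsel, ?_⟩
        rw [← he, RelIso.apply_symm_apply]
    -- Step B : there is no label strictly between γ and lab (φ y)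
    have hgap : ∀ q', q' < S.lab (φ y) → ¬ γ < q' := by
      intro q' hq'w hγq'
      have hlabu' : S.lab (S.sg (φ y) (S.lab (φ y)) q') = q' := S.lab_sg (φ y) hq'w
      have hredwu' : S.RedAdj (φ y) (S.sg (φ y) (S.lab (φ y)) q') :=
        S.redAdj_iff.mpr (Or.inl ⟨q', hq'w, rfl⟩)
      have hredyt' : S.RedAdj y (φ.symm (S.sg (φ y) (S.lab (φ y)) q')) :=
        S.red_pull φ hred y _ hredwu'
      rcases S.redAdj_iff.mp hredyt' with ⟨q, hq, he⟩ | ⟨hsel, he⟩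
      · have hq2 : q < γ := by rw [← hy]; exact hq
        have h3 : S.lab (φ.symm (S.sg (φ y) (S.lab (φ y)) q')) = q := by
          rw [← he]; exact S.lab_sg _ hq
        have h4 := IH q hq2 _ h3
        rw [RelIso.apply_symm_apply] at h4
        rw [hlabu'] at h4
        rw [h4] at hγq'
        exact absurd (hγq'.trans hq2) (lt_irrefl _)
      · -- both u and u' are the image of pr y
        have h5 : S.sg (φ y) (S.lab (φ y)) q' = S.sg (φ y) (S.lab (φ y)) γ := by
          rw [← RelIso.apply_symm_apply φ (S.sg (φ y) (S.lab (φ y)) q'), he, hA.2]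
        have h6 := S.sg_inj hq'w hγw h5
        rw [h6] at hγq'
        exact absurd hγq' (lt_irrefl _)
    -- Step C : φ y is not selected
    have hnsel : ¬ S.Sel (φ y) := by
      intro hselw
      have hredwp : S.RedAdj (φ y) (S.pr (φ y)) := S.redAdj_iff.mpr (Or.inr ⟨hselw, rfl⟩)
      have hredys : S.RedAdj y (φ.symm (S.pr (φ y))) := S.red_pull φ hred y _ hredwp
      rcases S.redAdj_iff.mp hredys with ⟨q, hq, he⟩ | ⟨hsel, he⟩
      · have hq2 : q < γ := by rw [← hy]; exact hq
        have h3 : S.lab (φ.symm (S.pr (φ y))) = q := by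
          rw [← he]; exact S.lab_sg _ hq
        have h4 := IH q hq2 _ h3
        rw [RelIso.apply_symm_apply] at h4
        have h5 := S.lab_lt_pr hselw
        rw [h4] at h5
        exact absurd ((hγw.trans h5).trans hq2) (lt_irrefl _)
      · have h6 : S.pr (φ y) = S.sg (φ y) (S.lab (φ y)) γ := by
          rw [← RelIso.apply_symm_apply φ (S.pr (φ y)), he, hA.2]
        exact S.pr_not_sg hγw h6.symm
    -- Step D : contradiction with the gap
    have hlabw : S.lab (φ y) = toLex (S.idx (φ y), 0) := S.lab_eq_of_not hnsel
    have hγ0 : toLex (ofLex γ) < toLex (S.idx (φ y), 0) := by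
      rw [toLex_ofLex, ← hlabw]
      exact hγw
    obtain ⟨hm1, hm2⟩ := S.J_mid hγ0
    rw [toLex_ofLex] at hm1
    refine hgap (toLex ((ofLex γ).1, (ofLex γ).2 + 1)) ?_ hm1
    rw [hlabw]
    exact hm2

lemma lab_phi_all (φ : S.G ≃g S.G) (hred : ∀ a b : V, S.RedAdj (φ a) (φ b) ↔ S.RedAdj a b)
    (v : V) : S.lab (φ v) = S.lab v := S.lab_phi φ hred (S.lab v) v rfl

lemma fix_unsel (φ : S.G ≃g S.G) (hred : ∀ a b : V, S.RedAdj (φ a) (φ b) ↔ S.RedAdj a b)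
    {y : V} (hy : ¬ S.Sel y) : φ y = y := by
  have hnsel2 : ¬ S.Sel (φ y) := by
    intro hsel
    have hredp : S.RedAdj (φ y) (S.pr (φ y)) := S.redAdj_iff.mpr (Or.inr ⟨hsel, rfl⟩)
    have h2 : S.RedAdj y (φ.symm (S.pr (φ y))) := S.red_pull φ hred y _ hredp
    rcases S.redAdj_iff.mp h2 with ⟨q, hq, he⟩ | ⟨hsel', he⟩
    · have h3 : S.lab (φ.symm (S.pr (φ y))) = q := by
        rw [← he]; exact S.lab_sg _ hq
      have h4 : S.lab (S.pr (φ y)) = q := by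
        rw [← RelIso.apply_symm_apply φ (S.pr (φ y)), S.lab_phi_all φ hred]
        exact h3
      have h5 := S.lab_lt_pr hsel
      rw [S.lab_phi_all φ hred, h4] at h5
      exact absurd (h5.trans hq) (lt_irrefl _)
    · exact hy hsel'
  have e1 := S.lab_eq_of_not hy
  have e2 := S.lab_eq_of_not hnsel2
  have e3 := S.lab_phi_all φ hred y
  rw [e1, e2] at e3
  have h7 : S.idx (φ y) = S.idx y := congrArg (fun p : S.J => (ofLex p).1) e3
  have h8 := congrArg S.vtx h7
  rwa [S.vtx_idx, S.vtx_idx] at h8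

lemma fix_all (φ : S.G ≃g S.G) (hred : ∀ a b : V, S.RedAdj (φ a) (φ b) ↔ S.RedAdj a b)
    (z : V) : φ z = z := by
  have main : ∀ i : S.I, ∀ z : V, S.idx z = i → φ z = z := by
    intro i
    induction i using WellFoundedLT.induction with
    | _ i IH =>
    intro z hz
    by_cases hsel : S.Sel z
    · obtain ⟨hlt, he⟩ := S.lab_spec_of_sel hsel
      have hp : φ (S.pr z) = S.pr z := by
        refine IH (S.idx (S.pr z)) ?_ _ rfl
        rw [← hz]
        exact S.idx_pr_lt hsel.1
      have hredpz : S.RedAdj (S.pr z) z := S.redAdj_iff.mpr (Or.inl ⟨S.lab z, hlt, he⟩)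
      have h1 : S.RedAdj (S.pr z) (φ z) := by
        have := (hred (S.pr z) z).mpr hredpz
        rwa [hp] at this
      rcases S.redAdj_iff.mp h1 with ⟨q, hq, he2⟩ | ⟨hselp, he2⟩
      · have h3 : S.lab (φ z) = q := by rw [← he2]; exact S.lab_sg _ hq
        rw [S.lab_phi_all φ hred] at h3
        rw [← h3] at he2
        rw [← he2]
        exact he
      · have h3 := S.lab_lt_pr hselp
        rw [← he2, S.lab_phi_all φ hred] at h3
        exact absurd (h3.trans hlt) (lt_irrefl _)
    · exact S.fix_unsel φ hred hsel
  exact main (S.idx z) z rfl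


lemma red_pres (φ : S.G ≃g S.G)
    (hφ : ∀ u v : V, S.G.Adj u v → S.col s(φ u, φ v) = S.col s(u, v)) :
    ∀ a b : V, S.RedAdj (φ a) (φ b) ↔ S.RedAdj a b := by
  intro a b
  by_cases hab : S.G.Adj a b
  · have h := hφ a b hab
    constructor
    · intro h1
      have h2 := S.col_eq_one_iff.mpr h1
      rw [h] at h2
      exact S.col_eq_one_iff.mp h2
    · intro h1
      have h2 := S.col_eq_one_iff.mpr h1
      rw [← h] at h2
      exact S.col_eq_one_iff.mp h2
  · constructor
    · intro h1
      exact absurd (φ.map_adj_iff.mp (S.redAdj_adj h1)) hab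
    · intro h1
      exact absurd (S.redAdj_adj h1) hab

end Setup
end DistProof

open Cardinal

universe u

/-- `G` has a distinguishing edge coloring with `n` colors, i.e. `D'(G) ≤ n`:
an edge coloring with `n` colors such that the only automorphism of `G` mapping each edge
to an edge of the same color is the identity. -/
def DistIndexLE {V : Type u} (G : SimpleGraph V) (n : ℕ) : Prop :=
  ∃ c : Sym2 V → Fin n, ∀ φ : G ≃g G,
    (∀ u v : V, G.Adj u v → c s(φ u, φ v) = c s(u, v)) → ∀ x, φ x = x

/-- If `G` is a connected α-regular graph for an infinite cardinal α, then `D'(G) ≤ 2`. -/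
theorem stmt_6 {V : Type u} (α : Cardinal.{u}) (hα : ℵ₀ ≤ α)
    (G : SimpleGraph V) (hGc : G.Connected)
    (hreg : ∀ v : V, #(G.neighborSet v) = α) :
    DistIndexLE G 2 := by
  let S : DistProof.Setup V := ⟨α, G, hα, hGc, hreg⟩
  exact ⟨S.col, fun φ hφ x => S.fix_all φ (S.red_pres φ hφ) x⟩
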